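/- Let P = {x ∈ ℝⁿ : Ax = b, Bx ≤ d} be bounded, let c ∈ ℤⁿ, and let x be a vertex of P that does not minimize cᵀx over P. Let αz be a steepest-descent augmentation at x and let α*z* be a greatest-improvement augmentation at x. Then cᵀx − cᵀ(x + αz) ≥ (ω₁/M₁)·(cᵀx − cᵀ(x + α*z*)). -/

import Mathlib

noncomputable section

variable {n mA mB : ℕ}

/-- The real matrix obtained from an integer matrix. -/
def rmat {m k : Type*} (M : Matrix m k ℤ) : Matrix m k ℝ := M.map (fun z => (z : ℝ))

/-- The real vector obtained from an integer vector. -/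
def rvec {m : Type*} (v : m → ℤ) : m → ℝ := fun i => (v i : ℝ)

/-- The feasible region `P = {x : Ax = b, Bx ≤ d}`. -/
def Pset (A : Matrix (Fin mA) (Fin n) ℤ) (B : Matrix (Fin mB) (Fin n) ℤ)
    (b : Fin mA → ℤ) (d : Fin mB → ℤ) : Set (Fin n → ℝ) :=
  {x | (rmat A).mulVec x = rvec b ∧ ∀ i, (rmat B).mulVec x i ≤ (d i : ℝ)}

/-- `g` is a circuit of the system `Ax = b, Bx ≤ d`:  `g` is a nonzero kernel element of `A`
whose image `Bg` is support-minimal among `{By : y ∈ ker A, y ≠ 0}`. -/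
def IsCircuit (A : Matrix (Fin mA) (Fin n) ℤ) (B : Matrix (Fin mB) (Fin n) ℤ)
    (g : Fin n → ℝ) : Prop :=
  g ≠ 0 ∧ (rmat A).mulVec g = 0 ∧
    ∀ y : Fin n → ℝ, y ≠ 0 → (rmat A).mulVec y = 0 →
      ¬ ({i | (rmat B).mulVec y i ≠ 0} ⊂ {i | (rmat B).mulVec g i ≠ 0})

/-- The set `C(A,B)` of circuits, normalized to have coprime integer components. -/
def CAB (A : Matrix (Fin mA) (Fin n) ℤ) (B : Matrix (Fin mB) (Fin n) ℤ) :
    Set (Fin n → ℝ) :=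
  {g | IsCircuit A B g ∧ ∃ gz : Fin n → ℤ, (∀ i, g i = (gz i : ℝ)) ∧
        Finset.univ.gcd (fun i => (gz i).natAbs) = 1}

/-- `cᵀx` for an integer objective `c` and a real point `x`. -/
def dotIC (c : Fin n → ℤ) (x : Fin n → ℝ) : ℝ := ∑ i, (c i : ℝ) * x i

/-- The 1-norm of a vector. -/
def norm1 (x : Fin n → ℝ) : ℝ := ∑ i, |x i|

/-- `α g` is a maximal augmentation at `x` (within `P`). -/
def IsMaxAug (P : Set (Fin n → ℝ)) (x g : Fin n → ℝ) (α : ℝ) : Prop :=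
  0 < α ∧ x + α • g ∈ P ∧ ∀ ε : ℝ, 0 < ε → x + (α + ε) • g ∉ P

/-- `δ`: the largest absolute value of the determinant of an `n × n` submatrix of the
stacked matrix `(A; B)`. -/
def deltaMax (A : Matrix (Fin mA) (Fin n) ℤ) (B : Matrix (Fin mB) (Fin n) ℤ) : ℝ :=
  sSup {r : ℝ | ∃ f : Fin n → (Fin mA ⊕ Fin mB), Function.Injective f ∧
        r = |((((Matrix.fromRows A B).submatrix f id).det : ℤ) : ℝ)|}

/-- An (exposed) face of `P`: the set of minimizers over `P` of some linear functional. -/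
def IsFace (P F : Set (Fin n → ℝ)) : Prop :=
  ∃ w : Fin n → ℝ, F = {x ∈ P | ∀ y ∈ P, ∑ i, w i * x i ≤ ∑ i, w i * y i}

/-- The (affine) dimension of a subset of `ℝⁿ`. -/
def dimS (S : Set (Fin n → ℝ)) : ℕ := Module.finrank ℝ (affineSpan ℝ S).direction

/-- A facet of `P`: a face of dimension `dim P − 1`. -/
def IsFacet (P F : Set (Fin n → ℝ)) : Prop := IsFace P F ∧ dimS F + 1 = dimS P

/-- `ω₁`: the minimum 1-norm distance from a vertex of `P` to a point on a facet of `P`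
not containing that vertex. -/
def omega1 (P : Set (Fin n → ℝ)) : ℝ :=
  sInf {r : ℝ | ∃ v ∈ Set.extremePoints ℝ P, ∃ F : Set (Fin n → ℝ),
        IsFacet P F ∧ v ∉ F ∧ ∃ f ∈ F, r = norm1 (v - f)}

/-- `M₁`: the maximum 1-norm distance between two vertices of `P`. -/
def M1 (P : Set (Fin n → ℝ)) : ℝ :=
  sSup {r : ℝ | ∃ v₁ ∈ Set.extremePoints ℝ P, ∃ v₂ ∈ Set.extremePoints ℝ P,
        r = norm1 (v₁ - v₂)}

/-- A greatest-improvement augmentation at `x`. -/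
def IsGIAug (A : Matrix (Fin mA) (Fin n) ℤ) (B : Matrix (Fin mB) (Fin n) ℤ)
    (P : Set (Fin n → ℝ)) (c : Fin n → ℤ) (x g : Fin n → ℝ) (α : ℝ) : Prop :=
  g ∈ CAB A B ∧ IsMaxAug P x g α ∧
    ∀ (g' : Fin n → ℝ) (α' : ℝ), g' ∈ CAB A B → 0 < α' → x + α' • g' ∈ P →
      -(dotIC c (α' • g')) ≤ -(dotIC c (α • g))

/-- A steepest-descent augmentation at `x`: a maximal augmentation along a circuit
maximizing `−cᵀg/‖g‖₁` among the circuits `g` with `x + εg ∈ P` for some `ε > 0`. -/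
def IsSteepAug (A : Matrix (Fin mA) (Fin n) ℤ) (B : Matrix (Fin mB) (Fin n) ℤ)
    (P : Set (Fin n → ℝ)) (c : Fin n → ℤ) (x g : Fin n → ℝ) (α : ℝ) : Prop :=
  g ∈ CAB A B ∧ IsMaxAug P x g α ∧
    ∀ g' : Fin n → ℝ, g' ∈ CAB A B → (∃ ε : ℝ, 0 < ε ∧ x + ε • g' ∈ P) →
      -(dotIC c g') / norm1 g' ≤ -(dotIC c g) / norm1 g


/-! ### Auxiliary development -/

/-- real dot product -/
def dotR (w x : Fin n → ℝ) : ℝ := ∑ i, w i * x i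

lemma dotR_add (w a c : Fin n → ℝ) : dotR w (a + c) = dotR w a + dotR w c := by
  simp [dotR, mul_add, Finset.sum_add_distrib]

lemma dotR_sub (w a c : Fin n → ℝ) : dotR w (a - c) = dotR w a - dotR w c := by
  simp [dotR, mul_sub, Finset.sum_sub_distrib]

lemma dotR_smul (w : Fin n → ℝ) (t : ℝ) (a : Fin n → ℝ) : dotR w (t • a) = t * dotR w a := by
  simp only [dotR, Finset.mul_sum, Pi.smul_apply, smul_eq_mul]
  exact Finset.sum_congr rfl fun i _ => by ring

lemma dotR_add_left (w u a : Fin n → ℝ) : dotR (w + u) a = dotR w a + dotR u a := by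
  simp [dotR, add_mul, Finset.sum_add_distrib]

lemma dotR_smul_left (w : Fin n → ℝ) (t : ℝ) (a : Fin n → ℝ) :
    dotR (t • w) a = t * dotR w a := by
  simp only [dotR, Finset.mul_sum, Pi.smul_apply, smul_eq_mul]
  exact Finset.sum_congr rfl fun i _ => by ring

lemma dotIC_add (c : Fin n → ℤ) (a e : Fin n → ℝ) :
    dotIC c (a + e) = dotIC c a + dotIC c e := by
  simp [dotIC, mul_add, Finset.sum_add_distrib]

lemma dotIC_smul (c : Fin n → ℤ) (t : ℝ) (a : Fin n → ℝ) :
    dotIC c (t • a) = t * dotIC c a := by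
  simp only [dotIC, Finset.mul_sum, Pi.smul_apply, smul_eq_mul]
  exact Finset.sum_congr rfl fun i _ => by ring

lemma norm1_nonneg (x : Fin n → ℝ) : 0 ≤ norm1 x :=
  Finset.sum_nonneg fun i _ => abs_nonneg _

lemma norm1_pos {x : Fin n → ℝ} (hx : x ≠ 0) : 0 < norm1 x := by
  rcases (norm1_nonneg x).lt_or_eq with h | h
  · exact h
  · exfalso; apply hx
    have h0 : ∀ i ∈ Finset.univ, |x i| = 0 := by
      intro i _
      have := (Finset.sum_eq_zero_iff_of_nonneg (fun i _ => abs_nonneg (x i))).1 h.symm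
      exact this i (Finset.mem_univ i)
    funext i
    simpa using abs_eq_zero.1 (h0 i (Finset.mem_univ i))

lemma norm1_smul (t : ℝ) (x : Fin n → ℝ) : norm1 (t • x) = |t| * norm1 x := by
  simp [norm1, abs_mul, Finset.mul_sum]

lemma norm1_neg (x : Fin n → ℝ) : norm1 (-x) = norm1 x := by
  simp [norm1]

/-- `P` is convex. -/
lemma convex_Pset (A : Matrix (Fin mA) (Fin n) ℤ) (B : Matrix (Fin mB) (Fin n) ℤ)
    (b : Fin mA → ℤ) (d : Fin mB → ℤ) : Convex ℝ (Pset A B b d) := by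
  intro u hu v hv s t hs ht hst
  constructor
  · rw [Matrix.mulVec_add, Matrix.mulVec_smul, Matrix.mulVec_smul, hu.1, hv.1]
    funext i; simp only [Pi.add_apply, Pi.smul_apply, smul_eq_mul]
    have : s * rvec b i + t * rvec b i = (s + t) * rvec b i := by ring
    rw [this, hst, one_mul]
  · intro i
    rw [Matrix.mulVec_add, Matrix.mulVec_smul, Matrix.mulVec_smul]
    have h := add_le_add (mul_le_mul_of_nonneg_left (hu.2 i) hs)
      (mul_le_mul_of_nonneg_left (hv.2 i) ht)
    have h2 : s * (d i : ℝ) + t * (d i : ℝ) = (d i : ℝ) := by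
      rw [← add_mul, hst, one_mul]
    calc (s • (rmat B).mulVec u + t • (rmat B).mulVec v) i
        = s * (rmat B).mulVec u i + t * (rmat B).mulVec v i := by
          simp [Pi.add_apply]
      _ ≤ (d i : ℝ) := by rw [← h2]; exact h

/-- `P` is closed. -/
lemma isClosed_Pset (A : Matrix (Fin mA) (Fin n) ℤ) (B : Matrix (Fin mB) (Fin n) ℤ)
    (b : Fin mA → ℤ) (d : Fin mB → ℤ) : IsClosed (Pset A B b d) := by
  have h1 : IsClosed {x : Fin n → ℝ | (rmat A).mulVec x = rvec b} := by
    have hc : Continuous fun x : Fin n → ℝ => (rmat A).mulVec x :=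
      ((rmat A).mulVecLin).continuous_of_finiteDimensional
    exact isClosed_eq hc continuous_const
  have h2 : IsClosed {x : Fin n → ℝ | ∀ i, (rmat B).mulVec x i ≤ (d i : ℝ)} := by
    have : {x : Fin n → ℝ | ∀ i, (rmat B).mulVec x i ≤ (d i : ℝ)} =
        ⋂ i, {x : Fin n → ℝ | (rmat B).mulVec x i ≤ (d i : ℝ)} := by
      ext x; simp
    rw [this]
    refine isClosed_iInter fun i => ?_
    have hc : Continuous fun x : Fin n → ℝ => (rmat B).mulVec x i :=
      (continuous_apply i).comp ((rmat B).mulVecLin).continuous_of_finiteDimensional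
    exact isClosed_le hc continuous_const
  exact h1.inter h2

lemma norm1_add_le (a e : Fin n → ℝ) : norm1 (a + e) ≤ norm1 a + norm1 e := by
  rw [norm1, norm1, norm1, ← Finset.sum_add_distrib]
  exact Finset.sum_le_sum fun i _ => abs_add_le _ _

/-- Injectivity of stacked system. -/
lemma kerAB {A : Matrix (Fin mA) (Fin n) ℤ} {B : Matrix (Fin mB) (Fin n) ℤ}
    (hAB : (rmat (Matrix.fromRows A B)).rank = n) {u : Fin n → ℝ}
    (hA : (rmat A).mulVec u = 0) (hB : (rmat B).mulVec u = 0) : u = 0 := by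
  have hmap : rmat (Matrix.fromRows A B) = Matrix.fromRows (rmat A) (rmat B) := by
    ext i j; cases i <;> rfl
  have hker : u ∈ LinearMap.ker (rmat (Matrix.fromRows A B)).mulVecLin := by
    rw [LinearMap.mem_ker, Matrix.mulVecLin_apply, hmap, Matrix.fromRows_mulVec, hA, hB]
    ext i; cases i <;> rfl
  have hrn := (rmat (Matrix.fromRows A B)).mulVecLin.finrank_range_add_finrank_ker
  rw [show Module.finrank ℝ (LinearMap.range (rmat (Matrix.fromRows A B)).mulVecLin) =
      (rmat (Matrix.fromRows A B)).rank from rfl, hAB] at hrn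
  have hfp : Module.finrank ℝ (Fin n → ℝ) = n := Module.finrank_fin_fun ℝ
  rw [hfp] at hrn
  have h0 : Module.finrank ℝ
      (LinearMap.ker (rmat (Matrix.fromRows A B)).mulVecLin) = 0 := by omega
  have hbot := Submodule.finrank_eq_zero.mp h0
  rw [hbot] at hker
  simpa using hker

/-- Extreme points of `P` are finite. -/
lemma finite_extremePoints (A : Matrix (Fin mA) (Fin n) ℤ) (B : Matrix (Fin mB) (Fin n) ℤ)
    (b : Fin mA → ℤ) (d : Fin mB → ℤ)
    (hAB : (rmat (Matrix.fromRows A B)).rank = n) :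
    (Set.extremePoints ℝ (Pset A B b d)).Finite := by
  set P := Pset A B b d
  set V := Set.extremePoints ℝ P with hV
  set f : (Fin n → ℝ) → Set (Fin mB) := fun v => {i | (rmat B).mulVec v i = (d i : ℝ)} with hf
  have hinj : Set.InjOn f V := by
    intro v hv w hw hfvw
    by_contra hne
    set u := w - v with hu
    have hvP : v ∈ P := hv.1
    have hwP : w ∈ P := hw.1
    have hAu : (rmat A).mulVec u = 0 := by
      rw [hu, Matrix.mulVec_sub, hvP.1, hwP.1, sub_self]
    have hune : u ≠ 0 := by
      intro h
      rw [hu, sub_eq_zero] at h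
      exact hne h.symm
    -- candidate ε
    by_cases hall : ∀ i, (rmat B).mulVec v i = (d i : ℝ)
    · -- all constraints tight: u in full kernel, contradiction
      have hallw : ∀ i, (rmat B).mulVec w i = (d i : ℝ) := by
        intro i
        have : i ∈ f v := hall i
        rw [hfvw] at this; exact this
      have hBu : (rmat B).mulVec u = 0 := by
        funext i
        rw [hu, Matrix.mulVec_sub]
        simp [hall i, hallw i]
      exact hune (kerAB hAB hAu hBu)
    · push_neg at hall
      obtain ⟨i0, hi0⟩ := hall
      set Sn : Finset (Fin mB) :=
        Finset.univ.filter (fun i => (rmat B).mulVec v i ≠ (d i : ℝ)) with hSn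
      have hSne : Sn.Nonempty := ⟨i0, by simp [hSn, hi0]⟩
      set ε : ℝ := Sn.inf' hSne
        (fun i => (((d i : ℝ) - (rmat B).mulVec v i) / (|(rmat B).mulVec u i| + 1))) with hε
      have hεpos : 0 < ε := by
        rw [hε, Finset.lt_inf'_iff]
        intro i hi
        have hne2 : (rmat B).mulVec v i ≠ (d i : ℝ) := by simpa [hSn] using hi
        have hlt : (rmat B).mulVec v i < (d i : ℝ) := lt_of_le_of_ne (hvP.2 i) hne2
        have hd : (0:ℝ) < |(rmat B).mulVec u i| + 1 := by positivity
        exact div_pos (by linarith) hd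
      have hmem : ∀ s : ℝ, |s| ≤ ε → v + s • u ∈ P := by
        intro s hs
        constructor
        · rw [Matrix.mulVec_add, Matrix.mulVec_smul, hAu, hvP.1]
          funext i; simp
        · intro i
          rw [Matrix.mulVec_add, Matrix.mulVec_smul]
          by_cases hti : (rmat B).mulVec v i = (d i : ℝ)
          · -- tight for v hence for w; Bu i = 0
            have htw : (rmat B).mulVec w i = (d i : ℝ) := by
              have : i ∈ f v := hti
              rw [hfvw] at this; exact this
            have hBui : (rmat B).mulVec u i = 0 := by
              rw [hu, Matrix.mulVec_sub]; simp [hti, htw]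
            simp [hBui, hti]
          · have hiS : i ∈ Sn := by simp [hSn, hti]
            have hεle : ε ≤ ((d i : ℝ) - (rmat B).mulVec v i) / (|(rmat B).mulVec u i| + 1) :=
              Finset.inf'_le _ hiS
            have habs : |s * (rmat B).mulVec u i| ≤ (d i : ℝ) - (rmat B).mulVec v i := by
              rw [abs_mul]
              have h1 : |s| * |(rmat B).mulVec u i| ≤ ε * (|(rmat B).mulVec u i| + 1) := by
                apply mul_le_mul hs (by linarith [le_refl (|(rmat B).mulVec u i|)])
                  (abs_nonneg _) (le_of_lt hεpos)
              have h2 : ε * (|(rmat B).mulVec u i| + 1) ≤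
                  (d i : ℝ) - (rmat B).mulVec v i := by
                have hd : (0:ℝ) < |(rmat B).mulVec u i| + 1 := by positivity
                calc ε * (|(rmat B).mulVec u i| + 1)
                    ≤ (((d i : ℝ) - (rmat B).mulVec v i) / (|(rmat B).mulVec u i| + 1)) *
                      (|(rmat B).mulVec u i| + 1) :=
                      mul_le_mul_of_nonneg_right hεle (le_of_lt hd)
                  _ = (d i : ℝ) - (rmat B).mulVec v i := by field_simp
              linarith
            have := neg_abs_le (s * (rmat B).mulVec u i)
            have h3 : s * (rmat B).mulVec u i ≤ |s * (rmat B).mulVec u i| := le_abs_self _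
            simp only [Pi.add_apply, Pi.smul_apply, smul_eq_mul]
            linarith
      have hvmem1 : v + ε • u ∈ P := hmem ε (by rw [abs_of_pos hεpos])
      have hvmem2 : v + (-ε) • u ∈ P := hmem (-ε) (by rw [abs_neg, abs_of_pos hεpos])
      have hseg : v ∈ openSegment ℝ (v + (-ε) • u) (v + ε • u) := by
        refine ⟨1/2, 1/2, by norm_num, by norm_num, by norm_num, ?_⟩
        funext i
        simp only [Pi.add_apply, Pi.smul_apply, smul_eq_mul, Pi.neg_apply]
        ring
      have := hv.2 hvmem1 hvmem2 (by rw [openSegment_symm]; exact hseg)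
      have hεu : ε • u = 0 := by
        have h := congrArg (fun q => q - v) this
        simpa [add_sub_cancel_left] using h
      exact hune (by simpa [hεpos.ne'] using smul_eq_zero.mp hεu)
  have hfin : (f '' V).Finite := Set.toFinite _
  exact Set.Finite.of_finite_image hfin hinj

lemma compact_Pset (A : Matrix (Fin mA) (Fin n) ℤ) (B : Matrix (Fin mB) (Fin n) ℤ)
    (b : Fin mA → ℤ) (d : Fin mB → ℤ) (hbdd : Bornology.IsBounded (Pset A B b d)) :
    IsCompact (Pset A B b d) :=
  Metric.isCompact_of_isClosed_isBounded (isClosed_Pset A B b d) hbdd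

/-- bounded polyhedron is the convex hull of its extreme points -/
lemma Pset_eq_convexHull (A : Matrix (Fin mA) (Fin n) ℤ) (B : Matrix (Fin mB) (Fin n) ℤ)
    (b : Fin mA → ℤ) (d : Fin mB → ℤ)
    (hAB : (rmat (Matrix.fromRows A B)).rank = n)
    (hbdd : Bornology.IsBounded (Pset A B b d)) :
    Pset A B b d = convexHull ℝ (Set.extremePoints ℝ (Pset A B b d)) := by
  have h := closure_convexHull_extremePoints (compact_Pset A B b d hbdd) (convex_Pset A B b d)
  nth_rewrite 1 [← h]
  exact ((finite_extremePoints A B b d hAB).isClosed_convexHull ℝ).closure_eq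

lemma convexOn_norm1_sub_right (r : Fin n → ℝ) :
    ConvexOn ℝ Set.univ (fun q : Fin n → ℝ => norm1 (q - r)) := by
  refine ⟨convex_univ, ?_⟩
  intro q1 _ q2 _ s t hs ht hst
  have heq : s • q1 + t • q2 - r = s • (q1 - r) + t • (q2 - r) := by
    funext i
    simp only [Pi.sub_apply, Pi.add_apply, Pi.smul_apply, smul_eq_mul]
    linear_combination (r i) * hst
  show norm1 (s • q1 + t • q2 - r) ≤ s * norm1 (q1 - r) + t * norm1 (q2 - r)
  rw [heq]
  calc norm1 (s • (q1 - r) + t • (q2 - r))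
      ≤ norm1 (s • (q1 - r)) + norm1 (t • (q2 - r)) := norm1_add_le _ _
    _ = s * norm1 (q1 - r) + t * norm1 (q2 - r) := by
        rw [norm1_smul, norm1_smul, abs_of_nonneg hs, abs_of_nonneg ht]

lemma convexOn_norm1_sub_left (q : Fin n → ℝ) :
    ConvexOn ℝ Set.univ (fun r : Fin n → ℝ => norm1 (q - r)) := by
  refine ⟨convex_univ, ?_⟩
  intro r1 _ r2 _ s t hs ht hst
  have heq : q - (s • r1 + t • r2) = s • (q - r1) + t • (q - r2) := by
    funext i
    simp only [Pi.sub_apply, Pi.add_apply, Pi.smul_apply, smul_eq_mul]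
    linear_combination (-(q i)) * hst
  show norm1 (q - (s • r1 + t • r2)) ≤ s * norm1 (q - r1) + t * norm1 (q - r2)
  rw [heq]
  calc norm1 (s • (q - r1) + t • (q - r2))
      ≤ norm1 (s • (q - r1)) + norm1 (t • (q - r2)) := norm1_add_le _ _
    _ = s * norm1 (q - r1) + t * norm1 (q - r2) := by
        rw [norm1_smul, norm1_smul, abs_of_nonneg hs, abs_of_nonneg ht]

/-- 1-norm distance between any two points of `P` is at most `M₁`. -/
lemma norm1_le_M1 (A : Matrix (Fin mA) (Fin n) ℤ) (B : Matrix (Fin mB) (Fin n) ℤ)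
    (b : Fin mA → ℤ) (d : Fin mB → ℤ)
    (hAB : (rmat (Matrix.fromRows A B)).rank = n)
    (hbdd : Bornology.IsBounded (Pset A B b d))
    {q r : Fin n → ℝ} (hq : q ∈ Pset A B b d) (hr : r ∈ Pset A B b d) :
    norm1 (q - r) ≤ M1 (Pset A B b d) := by
  set P := Pset A B b d with hP
  set V := Set.extremePoints ℝ P with hVdef
  have hPV : P = convexHull ℝ V := Pset_eq_convexHull A B b d hAB hbdd
  obtain ⟨C, hC⟩ := isBounded_iff_forall_norm_le.mp hbdd
  have hub : ∀ rr ∈ {r : ℝ | ∃ v₁ ∈ V, ∃ v₂ ∈ V, r = norm1 (v₁ - v₂)},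
      rr ≤ (n : ℝ) * (2 * C) := by
    rintro rr ⟨v1, hv1, v2, hv2, rfl⟩
    have h1 : ∀ i, |v1 i - v2 i| ≤ 2 * C := by
      intro i
      have a1 : |v1 i| ≤ C := by
        have h := norm_le_pi_norm v1 i
        have h2 := hC v1 (extremePoints_subset hv1)
        rw [Real.norm_eq_abs] at h
        linarith
      have a2 : |v2 i| ≤ C := by
        have h := norm_le_pi_norm v2 i
        have h2 := hC v2 (extremePoints_subset hv2)
        rw [Real.norm_eq_abs] at h
        linarith
      calc |v1 i - v2 i| = |v1 i + -(v2 i)| := by ring_nf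
        _ ≤ |v1 i| + |-(v2 i)| := abs_add_le _ _
        _ = |v1 i| + |v2 i| := by rw [abs_neg]
        _ ≤ 2 * C := by linarith
    calc norm1 (v1 - v2) = ∑ i, |v1 i - v2 i| := rfl
      _ ≤ ∑ _i : Fin n, (2 * C) := Finset.sum_le_sum (fun i _ => h1 i)
      _ = (n : ℝ) * (2 * C) := by
          rw [Finset.sum_const, Finset.card_univ, Fintype.card_fin, nsmul_eq_mul]
  have hbddA : BddAbove {r : ℝ | ∃ v₁ ∈ V, ∃ v₂ ∈ V, r = norm1 (v₁ - v₂)} :=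
    ⟨(n : ℝ) * (2 * C), hub⟩
  have hqc : q ∈ convexHull ℝ V := by rw [← hPV]; exact hq
  have hrc : r ∈ convexHull ℝ V := by rw [← hPV]; exact hr
  obtain ⟨v1, hv1, h1⟩ :=
    (convexOn_norm1_sub_right r).exists_ge_of_mem_convexHull (Set.subset_univ V) hqc
  obtain ⟨v2, hv2, h2⟩ :=
    (convexOn_norm1_sub_left v1).exists_ge_of_mem_convexHull (Set.subset_univ V) hrc
  have hmem : norm1 (v1 - v2) ∈
      {r : ℝ | ∃ v₁ ∈ V, ∃ v₂ ∈ V, r = norm1 (v₁ - v₂)} := ⟨v1, hv1, v2, hv2, rfl⟩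
  have hle := le_csSup hbddA hmem
  rw [M1]
  -- identify sets
  calc norm1 (q - r) ≤ norm1 (v1 - r) := h1
    _ ≤ norm1 (v1 - v2) := h2
    _ ≤ _ := hle

/-- the face of `P` exposed by minimizing `w`. -/
def faceSet (P : Set (Fin n → ℝ)) (w : Fin n → ℝ) : Set (Fin n → ℝ) :=
  {q ∈ P | ∀ y ∈ P, dotR w q ≤ dotR w y}

lemma isFace_faceSet (P : Set (Fin n → ℝ)) (w : Fin n → ℝ) : IsFace P (faceSet P w) :=
  ⟨w, rfl⟩

lemma faceSet_subset (P : Set (Fin n → ℝ)) (w : Fin n → ℝ) : faceSet P w ⊆ P :=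
  fun _ h => h.1

/-- A point of `P` lying in the affine span of an exposed face lies in the face. -/
lemma mem_faceSet_of_mem_affineSpan {P : Set (Fin n → ℝ)} {w p q : Fin n → ℝ}
    (hp : p ∈ faceSet P w) (hq : q ∈ P) (hspan : q ∈ affineSpan ℝ (faceSet P w)) :
    q ∈ faceSet P w := by
  set m := dotR w p with hm
  set S : AffineSubspace ℝ (Fin n → ℝ) :=
    { carrier := {y | dotR w y = m}
      smul_vsub_vadd_mem' := by
        intro c p1 p2 p3 h1 h2 h3
        simp only [Set.mem_setOf_eq] at h1 h2 h3 ⊢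
        have : c • (p1 -ᵥ p2) +ᵥ p3 = c • (p1 - p2) + p3 := by
          rw [vsub_eq_sub, vadd_eq_add]
        rw [this, dotR_add, dotR_smul, dotR_sub, h1, h2, h3]
        ring } with hS
  have hsub : faceSet P w ⊆ (S : Set (Fin n → ℝ)) := by
    intro q' hq'
    have h1 : dotR w q' ≤ m := hq'.2 p hp.1
    have h2 : m ≤ dotR w q' := hp.2 q' hq'.1
    exact le_antisymm h1 h2
  have hle : affineSpan ℝ (faceSet P w) ≤ S := affineSpan_le.mpr hsub
  have hqm : dotR w q = m := hle hspan
  exact ⟨hq, fun y hy => by rw [hqm]; exact hp.2 y hy⟩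

/-- A dual functional vanishing on a subspace and equal to 1 on a given outside vector. -/
lemma exists_dual (C : Submodule ℝ (Fin n → ℝ)) {v : Fin n → ℝ} (hv : v ∉ C) :
    ∃ u : Fin n → ℝ, (∀ e ∈ C, dotR u e = 0) ∧ dotR u v = 1 := by
  have hq : (Submodule.Quotient.mk v : (Fin n → ℝ) ⧸ C) ≠ 0 := by
    simpa [Submodule.Quotient.mk_eq_zero] using hv
  have hex : ∃ φ : Module.Dual ℝ ((Fin n → ℝ) ⧸ C),
      φ (Submodule.Quotient.mk v) ≠ 0 := by
    by_contra hno
    push_neg at hno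
    exact hq ((Module.forall_dual_apply_eq_zero_iff ℝ _).mp hno)
  obtain ⟨φ, hφ⟩ := hex
  set a := φ (Submodule.Quotient.mk v) with ha
  set ψ : (Fin n → ℝ) →ₗ[ℝ] ℝ := (a⁻¹ • φ).comp C.mkQ with hψ
  have hψ_eval : ∀ y : Fin n → ℝ, ψ y = a⁻¹ * φ (Submodule.Quotient.mk y) := by
    intro y; simp [hψ, Submodule.mkQ_apply]
  set u : Fin n → ℝ := fun i => ψ (fun j => if i = j then (1:ℝ) else 0) with hu
  have hdot : ∀ y : Fin n → ℝ, dotR u y = ψ y := by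
    intro y
    have hy : y = ∑ i, y i • fun j => if i = j then (1:ℝ) else 0 := pi_eq_sum_univ y
    calc dotR u y = ∑ i, y i * ψ (fun j => if i = j then (1:ℝ) else 0) := by
          rw [dotR]; exact Finset.sum_congr rfl fun i _ => by rw [hu]; ring
      _ = ψ (∑ i, y i • fun j => if i = j then (1:ℝ) else 0) := by
          rw [map_sum]
          exact (Finset.sum_congr rfl fun i _ => by rw [map_smul]; rfl).symm
      _ = ψ y := by rw [← hy]
  refine ⟨u, ?_, ?_⟩
  · intro e he
    rw [hdot, hψ_eval]
    have : (Submodule.Quotient.mk e : (Fin n → ℝ) ⧸ C) = 0 :=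
      (Submodule.Quotient.mk_eq_zero C).mpr he
    rw [this, map_zero, mul_zero]
  · rw [hdot, hψ_eval, ← ha, inv_mul_cancel₀ hφ]

/-- strict inclusion of exposed faces increases dimension. -/
lemma dimS_lt_of_faceSet_ssub {P : Set (Fin n → ℝ)} {w w' p v' : Fin n → ℝ}
    (hsub : faceSet P w ⊆ faceSet P w') (hp : p ∈ faceSet P w)
    (hv' : v' ∈ faceSet P w') (hv'n : v' ∉ faceSet P w) :
    dimS (faceSet P w) < dimS (faceSet P w') := by
  have hle : affineSpan ℝ (faceSet P w) ≤ affineSpan ℝ (faceSet P w') :=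
    affineSpan_mono ℝ hsub
  have hDle : (affineSpan ℝ (faceSet P w)).direction ≤
      (affineSpan ℝ (faceSet P w')).direction := AffineSubspace.direction_le hle
  rcases lt_or_ge (dimS (faceSet P w)) (dimS (faceSet P w')) with h | h
  · exact h
  · exfalso
    have heq : (affineSpan ℝ (faceSet P w)).direction =
        (affineSpan ℝ (faceSet P w')).direction :=
      Submodule.eq_of_le_of_finrank_le hDle h
    have hv'span : v' ∈ affineSpan ℝ (faceSet P w) := by
      have h1 : v' ∈ affineSpan ℝ (faceSet P w') := subset_affineSpan ℝ _ hv'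
      have h2 : p ∈ affineSpan ℝ (faceSet P w') := hle (subset_affineSpan ℝ _ hp)
      have h3 : v' -ᵥ p ∈ (affineSpan ℝ (faceSet P w')).direction :=
        AffineSubspace.vsub_mem_direction h1 h2
      rw [← heq] at h3
      have := AffineSubspace.vadd_mem_of_mem_direction h3 (subset_affineSpan ℝ _ hp)
      simpa [vsub_eq_sub, vadd_eq_add, sub_add_cancel] using this
    exact hv'n (mem_faceSet_of_mem_affineSpan hp hv'.1 hv'span)

/-- a proper exposed face has smaller dimension. -/
lemma dimS_faceSet_lt {P : Set (Fin n → ℝ)} {w p x : Fin n → ℝ}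
    (hp : p ∈ faceSet P w) (hx : x ∈ P) (hxF : x ∉ faceSet P w) :
    dimS (faceSet P w) < dimS P := by
  have hle : affineSpan ℝ (faceSet P w) ≤ affineSpan ℝ P :=
    affineSpan_mono ℝ (faceSet_subset P w)
  have hDle : (affineSpan ℝ (faceSet P w)).direction ≤ (affineSpan ℝ P).direction :=
    AffineSubspace.direction_le hle
  rcases lt_or_ge (dimS (faceSet P w)) (dimS P) with h | h
  · exact h
  · exfalso
    have heq : (affineSpan ℝ (faceSet P w)).direction = (affineSpan ℝ P).direction :=
      Submodule.eq_of_le_of_finrank_le hDle h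
    have hxspan : x ∈ affineSpan ℝ (faceSet P w) := by
      have h1 : x ∈ affineSpan ℝ P := subset_affineSpan ℝ _ hx
      have h2 : p ∈ affineSpan ℝ P := subset_affineSpan ℝ _ hp.1
      have h3 : x -ᵥ p ∈ (affineSpan ℝ P).direction :=
        AffineSubspace.vsub_mem_direction h1 h2
      rw [← heq] at h3
      have := AffineSubspace.vadd_mem_of_mem_direction h3 (subset_affineSpan ℝ _ hp)
      simpa [vsub_eq_sub, vadd_eq_add, sub_add_cancel] using this
    exact hxF (mem_faceSet_of_mem_affineSpan hp hx hxspan)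

/-- at the endpoint of a maximal augmentation, some inequality with `B_i g > 0` is tight. -/
lemma exists_tight_constraint (A : Matrix (Fin mA) (Fin n) ℤ) (B : Matrix (Fin mB) (Fin n) ℤ)
    (b : Fin mA → ℤ) (d : Fin mB → ℤ) {x g : Fin n → ℝ} {α : ℝ}
    (hxP : x ∈ Pset A B b d) (hmax : IsMaxAug (Pset A B b d) x g α) :
    ∃ i, (rmat B).mulVec (x + α • g) i = (d i : ℝ) ∧ 0 < (rmat B).mulVec g i := by
  obtain ⟨hα, hp, hnomore⟩ := hmax
  set p := x + α • g with hpdef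
  have hAg : (rmat A).mulVec g = 0 := by
    have h1 : (rmat A).mulVec p = rvec b := hp.1
    have h2 : (rmat A).mulVec x = rvec b := hxP.1
    have h3 : (rmat A).mulVec p = (rmat A).mulVec x + α • (rmat A).mulVec g := by
      rw [hpdef, Matrix.mulVec_add, Matrix.mulVec_smul]
    rw [h1, h2] at h3
    have h4 : α • (rmat A).mulVec g = 0 := by
      have := h3.symm
      rwa [add_eq_left] at this
    have := smul_eq_zero.mp h4
    rcases this with h | h
    · exact absurd h hα.ne'
    · exact h
  by_contra hno
  push_neg at hno
  -- every constraint with positive direction is slack at p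
  have hkey : ∀ i, 0 < (rmat B).mulVec g i → (rmat B).mulVec p i < (d i : ℝ) := by
    intro i hgi
    refine lt_of_le_of_ne (hp.2 i) (fun h => ?_)
    exact absurd hgi (not_lt.mpr (hno i h))
  have hfeas : ∀ ε : ℝ, 0 < ε → (∀ i, 0 < (rmat B).mulVec g i →
      (rmat B).mulVec p i + ε * (rmat B).mulVec g i ≤ (d i : ℝ)) →
      x + (α + ε) • g ∈ Pset A B b d := by
    intro ε hε hok
    have hxe : x + (α + ε) • g = p + ε • g := by
      rw [hpdef]; funext i
      simp only [Pi.add_apply, Pi.smul_apply, smul_eq_mul]; ring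
    rw [hxe]
    constructor
    · rw [Matrix.mulVec_add, Matrix.mulVec_smul, hAg, hp.1]
      funext i; simp
    · intro i
      rw [Matrix.mulVec_add, Matrix.mulVec_smul]
      rcases le_or_gt ((rmat B).mulVec g i) 0 with hgle | hgpos
      · have : (rmat B).mulVec p i + ε * (rmat B).mulVec g i ≤ (rmat B).mulVec p i := by
          nlinarith
        simp only [Pi.add_apply, Pi.smul_apply, smul_eq_mul]
        exact le_trans this (hp.2 i)
      · have := hok i hgpos
        simpa using this
  set S : Finset (Fin mB) := Finset.univ.filter (fun i => 0 < (rmat B).mulVec g i) with hSdef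
  by_cases hS : S.Nonempty
  · set ε : ℝ := S.inf' hS (fun i => ((d i : ℝ) - (rmat B).mulVec p i) / (rmat B).mulVec g i)
      with hεdef
    have hεpos : 0 < ε := by
      rw [hεdef, Finset.lt_inf'_iff]
      intro i hi
      have hgi : 0 < (rmat B).mulVec g i := by simpa [hSdef] using hi
      exact div_pos (by linarith [hkey i hgi]) hgi
    refine hnomore ε hεpos (hfeas ε hεpos ?_)
    intro i hgi
    have hiS : i ∈ S := by simp [hSdef, hgi]
    have hle : ε ≤ ((d i : ℝ) - (rmat B).mulVec p i) / (rmat B).mulVec g i :=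
      Finset.inf'_le _ hiS
    have := (le_div_iff₀ hgi).mp hle
    linarith
  · refine hnomore 1 one_pos (hfeas 1 one_pos ?_)
    intro i hgi
    exfalso
    exact hS ⟨i, by simp [hSdef, hgi]⟩

/-- Key step: a non-facet proper exposed face containing `p` but not `x` can be enlarged to a
strictly bigger exposed face still containing `p` but not `x`. -/
lemma claimA (A : Matrix (Fin mA) (Fin n) ℤ) (B : Matrix (Fin mB) (Fin n) ℤ)
    (b : Fin mA → ℤ) (d : Fin mB → ℤ)
    (hAB : (rmat (Matrix.fromRows A B)).rank = n)
    (hbdd : Bornology.IsBounded (Pset A B b d))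
    {x p w : Fin n → ℝ} (hp : p ∈ faceSet (Pset A B b d) w)
    (hxP : x ∈ Pset A B b d) (hxF : x ∉ faceSet (Pset A B b d) w)
    (hdim : dimS (faceSet (Pset A B b d) w) + 2 ≤ dimS (Pset A B b d)) :
    ∃ w' : Fin n → ℝ, p ∈ faceSet (Pset A B b d) w' ∧ x ∉ faceSet (Pset A B b d) w' ∧
      faceSet (Pset A B b d) w ⊆ faceSet (Pset A B b d) w' ∧
      ∃ v', v' ∈ faceSet (Pset A B b d) w' ∧ v' ∉ faceSet (Pset A B b d) w := by
  set P := Pset A B b d with hPdef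
  set F := faceSet P w with hF
  set V := Set.extremePoints ℝ P with hVdef
  have hPV : P = convexHull ℝ V := Pset_eq_convexHull A B b d hAB hbdd
  have hVfin : V.Finite := finite_extremePoints A B b d hAB
  set D := (affineSpan ℝ F).direction with hD
  have hpspan : p ∈ affineSpan ℝ F := subset_affineSpan ℝ _ hp
  -- x - p ∉ D
  have hxpD : x - p ∉ D := by
    intro h
    have hx_span : x ∈ affineSpan ℝ F := by
      have := AffineSubspace.vadd_mem_of_mem_direction h hpspan
      simpa [vsub_eq_sub, vadd_eq_add, sub_add_cancel] using this
    exact hxF (mem_faceSet_of_mem_affineSpan hp hxP hx_span)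
  have hxpne : x - p ≠ 0 := by
    intro h
    exact hxpD (h ▸ Submodule.zero_mem D)
  set C := D ⊔ (Submodule.span ℝ {x - p}) with hC
  -- exists vertex outside C
  have hvex : ∃ v ∈ V, v - p ∉ C := by
    by_contra hno
    push_neg at hno
    have hPsub : P ⊆ (AffineSubspace.mk' p C : Set (Fin n → ℝ)) := by
      rw [hPV]
      refine convexHull_min ?_ (AffineSubspace.mk' p C).convex
      intro v hv
      have h1 := hno v hv
      have : v = (v - p) +ᵥ p := by
        rw [vadd_eq_add, sub_add_cancel]
      rw [this]
      exact AffineSubspace.vadd_mem_mk' p h1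
    have hspan_le : affineSpan ℝ P ≤ AffineSubspace.mk' p C := affineSpan_le.mpr hPsub
    have hdir : (affineSpan ℝ P).direction ≤ C := by
      have := AffineSubspace.direction_le hspan_le
      rwa [AffineSubspace.direction_mk'] at this
    have h1 : dimS P ≤ Module.finrank ℝ C := Submodule.finrank_mono hdir
    have h2 : Module.finrank ℝ C ≤ Module.finrank ℝ D + 1 := by
      calc Module.finrank ℝ C
          ≤ Module.finrank ℝ D + Module.finrank ℝ (Submodule.span ℝ {x - p}) :=
            Submodule.finrank_add_le_finrank_add_finrank D _
        _ = Module.finrank ℝ D + 1 := by rw [finrank_span_singleton hxpne]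
    have h3 : dimS F = Module.finrank ℝ D := rfl
    omega
  obtain ⟨v, hvV, hvC⟩ := hvex
  -- dual functionals
  obtain ⟨u1, hu1C, hu1v⟩ := exists_dual C hvC
  obtain ⟨u0, hu0D, hu0xp⟩ := exists_dual D hxpD
  set s : ℝ := 1 / (2 * (|dotR u0 (v - p)| + 1)) with hs
  have hspos : 0 < s := by rw [hs]; positivity
  set u : Fin n → ℝ := (-1 : ℝ) • u1 + s • u0 with hu
  have hu_dot : ∀ y, dotR u y = -(dotR u1 y) + s * dotR u0 y := by
    intro y
    rw [hu, dotR_add_left, dotR_smul_left, dotR_smul_left]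
    ring
  have huD : ∀ e ∈ D, dotR u e = 0 := by
    intro e he
    rw [hu_dot, hu1C e (Submodule.mem_sup_left he), hu0D e he]
    ring
  have huxp : 0 < dotR u (x - p) := by
    rw [hu_dot, hu1C _ (Submodule.mem_sup_right (Submodule.mem_span_singleton_self _)), hu0xp]
    simpa using hspos
  have huvp : dotR u (v - p) < 0 := by
    rw [hu_dot, hu1v]
    have habs : dotR u0 (v - p) ≤ |dotR u0 (v - p)| := le_abs_self _
    have hkey : s * (|dotR u0 (v - p)| + 1) = 1 / 2 := by
      rw [hs]; field_simp
    nlinarith [hspos]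
  set m := dotR w p with hm
  -- vertices outside F have strictly larger w-value
  have hgap : ∀ v' ∈ V, v' ∉ F → m < dotR w v' := by
    intro v' hv' hnF
    have hv'P : v' ∈ P := extremePoints_subset hv'
    rcases lt_or_ge m (dotR w v') with h | h
    · exact h
    · exfalso
      apply hnF
      have heq : dotR w v' = m := le_antisymm h (hp.2 v' hv'P)
      exact ⟨hv'P, fun y hy => by rw [heq]; exact hp.2 y hy⟩
  -- members of F
  have hFu : ∀ q ∈ F, dotR u q = dotR u p ∧ dotR w q = m := by
    intro q hq
    have hqD : q - p ∈ D := by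
      have h1 : q ∈ affineSpan ℝ F := subset_affineSpan ℝ _ hq
      have := AffineSubspace.vsub_mem_direction h1 hpspan
      simpa [vsub_eq_sub] using this
    constructor
    · have := huD _ hqD
      rw [dotR_sub] at this
      linarith
    · exact le_antisymm (hq.2 p hp.1) (hp.2 q hq.1)
  set Vfin := hVfin.toFinset with hVfin'
  set Sm := Vfin.filter (fun v' => dotR u v' < dotR u p) with hSm
  have hmemSm : ∀ v' ∈ Sm, v' ∈ V ∧ dotR u v' < dotR u p := by
    intro v' h
    rw [hSm, Finset.mem_filter] at h
    exact ⟨hVfin.mem_toFinset.mp h.1, h.2⟩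
  have hvSm : v ∈ Sm := by
    rw [hSm, Finset.mem_filter]
    refine ⟨hVfin.mem_toFinset.mpr hvV, ?_⟩
    have := huvp
    rw [dotR_sub] at this
    linarith
  have hSmne : Sm.Nonempty := ⟨v, hvSm⟩
  have hSmF : ∀ v' ∈ Sm, v' ∉ F := by
    intro v' h hF'
    have h1 := (hFu v' hF').1
    have h2 := (hmemSm v' h).2
    linarith
  set tf : (Fin n → ℝ) → ℝ := fun v' => (dotR w v' - m) / (dotR u p - dotR u v') with htf
  set tstar := Sm.inf' hSmne tf with ht
  have htpos : 0 < tstar := by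
    rw [ht, Finset.lt_inf'_iff]
    intro v' hv'
    have h1 := (hmemSm v' hv').2
    have h2 := hgap v' (hmemSm v' hv').1 (hSmF v' hv')
    exact div_pos (by linarith) (by linarith)
  set w' := w + tstar • u with hw'
  have hdot' : ∀ y, dotR w' y = dotR w y + tstar * dotR u y := by
    intro y
    rw [hw', dotR_add_left, dotR_smul_left]
  -- min over vertices
  have hvertex : ∀ v' ∈ V, dotR w' p ≤ dotR w' v' := by
    intro v' hv'
    rw [hdot', hdot']
    by_cases hvF : v' ∈ F
    · obtain ⟨h1, h2⟩ := hFu v' hvF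
      rw [h1, h2]
    · have hg := hgap v' hv' hvF
      rcases le_or_gt (dotR u p) (dotR u v') with hun | hun
      · nlinarith
      · have hv'Sm : v' ∈ Sm := by
          rw [hSm, Finset.mem_filter]
          exact ⟨hVfin.mem_toFinset.mpr hv', hun⟩
        have hle : tstar ≤ (dotR w v' - m) / (dotR u p - dotR u v') :=
          Finset.inf'_le tf hv'Sm
        have hpos2 : 0 < dotR u p - dotR u v' := by linarith
        have := (le_div_iff₀ hpos2).mp hle
        linarith
  -- min over P
  have hmin : ∀ q ∈ P, dotR w' p ≤ dotR w' q := by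
    intro q hq
    have hqc : q ∈ convexHull ℝ V := by rw [← hPV]; exact hq
    have hconv : ConvexOn ℝ Set.univ (fun y : Fin n → ℝ => -dotR w' y) := by
      refine ⟨convex_univ, ?_⟩
      intro a _ a2 _ sa sb hsa hsb hsab
      show -dotR w' (sa • a + sb • a2) ≤ sa * -dotR w' a + sb * -dotR w' a2
      rw [dotR_add, dotR_smul, dotR_smul]
      ring_nf
      exact le_refl _
    obtain ⟨v', hv', hle⟩ := hconv.exists_ge_of_mem_convexHull (Set.subset_univ V) hqc
    have h2 := hvertex v' hv'
    have hle' : -dotR w' q ≤ -dotR w' v' := hle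
    linarith
  have hpF' : p ∈ faceSet P w' := ⟨hp.1, hmin⟩
  refine ⟨w', hpF', ?_, ?_, ?_⟩
  · -- x ∉ F'
    intro hxF'
    have h1 : dotR w' x ≤ dotR w' p := hxF'.2 p hp.1
    have h2 : m ≤ dotR w x := hp.2 x hxP
    have h3 : 0 < dotR u x - dotR u p := by
      have := huxp
      rw [dotR_sub] at this
      linarith
    rw [hdot', hdot'] at h1
    nlinarith
  · -- F ⊆ F'
    intro q hq
    obtain ⟨h1, h2⟩ := hFu q hq
    have heq : dotR w' q = dotR w' p := by rw [hdot', hdot', h1, h2]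
    exact ⟨hq.1, fun y hy => by rw [heq]; exact hmin y hy⟩
  · -- new vertex
    obtain ⟨vs, hvsSm, hvs⟩ := Finset.exists_mem_eq_inf' hSmne tf
    have h1 := (hmemSm vs hvsSm).2
    have hposd : 0 < dotR u p - dotR u vs := by linarith
    have heqt : tstar = (dotR w vs - m) / (dotR u p - dotR u vs) := by rw [ht, hvs]
    have heq : dotR w' vs = dotR w' p := by
      rw [hdot', hdot', heqt]
      field_simp
      ring
    refine ⟨vs, ⟨extremePoints_subset (hmemSm vs hvsSm).1, fun y hy => ?_⟩, hSmF vs hvsSm⟩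
    rw [heq]
    exact hmin y hy

/-- Every proper exposed face pair (p in, x out) extends to a facet containing `p`, avoiding `x`. -/
lemma exists_facet (A : Matrix (Fin mA) (Fin n) ℤ) (B : Matrix (Fin mB) (Fin n) ℤ)
    (b : Fin mA → ℤ) (d : Fin mB → ℤ)
    (hAB : (rmat (Matrix.fromRows A B)).rank = n)
    (hbdd : Bornology.IsBounded (Pset A B b d))
    {x p w : Fin n → ℝ} (hp : p ∈ faceSet (Pset A B b d) w)
    (hxP : x ∈ Pset A B b d) (hxF : x ∉ faceSet (Pset A B b d) w) :
    ∃ G : Set (Fin n → ℝ), IsFacet (Pset A B b d) G ∧ p ∈ G ∧ x ∉ G := by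
  set P := Pset A B b d with hPdef
  suffices H : ∀ j : ℕ, ∀ w' : Fin n → ℝ, p ∈ faceSet P w' → x ∉ faceSet P w' →
      dimS P - dimS (faceSet P w') ≤ j → ∃ G, IsFacet P G ∧ p ∈ G ∧ x ∉ G by
    exact H (dimS P) w hp hxF (by omega)
  intro j
  induction j with
  | zero =>
    intro w' hp' hx' hj
    have := dimS_faceSet_lt hp' hxP hx'
    omega
  | succ j ih =>
    intro w' hp' hx' hj
    have hlt := dimS_faceSet_lt hp' hxP hx'
    by_cases hcase : dimS (faceSet P w') + 1 = dimS P
    · exact ⟨faceSet P w', ⟨isFace_faceSet P w', hcase⟩, hp', hx'⟩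
    · have hdim2 : dimS (faceSet P w') + 2 ≤ dimS P := by omega
      obtain ⟨w'', hpw, hxw, hsub, v', hv'w, hv'n⟩ :=
        claimA A B b d hAB hbdd hp' hxP hx' hdim2
      have hdimlt := dimS_lt_of_faceSet_ssub hsub hp' hv'w hv'n
      rw [← hPdef] at hpw hxw hdimlt
      exact ih w'' hpw hxw (by omega)

/-- `ω₁` is at most the length of any maximal augmentation from a vertex. -/
lemma omega1_le_maxaug (A : Matrix (Fin mA) (Fin n) ℤ) (B : Matrix (Fin mB) (Fin n) ℤ)
    (b : Fin mA → ℤ) (d : Fin mB → ℤ)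
    (hAB : (rmat (Matrix.fromRows A B)).rank = n)
    (hbdd : Bornology.IsBounded (Pset A B b d))
    {x z : Fin n → ℝ} {α : ℝ} (hx : x ∈ Set.extremePoints ℝ (Pset A B b d))
    (hmax : IsMaxAug (Pset A B b d) x z α) :
    omega1 (Pset A B b d) ≤ α * norm1 z := by
  set P := Pset A B b d with hPdef
  have hxP : x ∈ P := extremePoints_subset hx
  obtain ⟨i, htight, hgpos⟩ := exists_tight_constraint A B b d hxP hmax
  obtain ⟨hα, hpP, _⟩ := hmax
  set p := x + α • z with hpdef
  set w0 : Fin n → ℝ := fun j => -(rmat B i j) with hw0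
  have hdotw0 : ∀ y : Fin n → ℝ, dotR w0 y = -((rmat B).mulVec y i) := by
    intro y
    rw [dotR, Matrix.mulVec, dotProduct, ← Finset.sum_neg_distrib]
    exact Finset.sum_congr rfl fun j _ => by rw [hw0]; ring
  have hpF : p ∈ faceSet P w0 := by
    refine ⟨hpP, fun y hy => ?_⟩
    rw [hdotw0, hdotw0, htight]
    have := hy.2 i
    linarith
  have hBx : (rmat B).mulVec x i < (d i : ℝ) := by
    have hdec : (rmat B).mulVec p i = (rmat B).mulVec x i + α * (rmat B).mulVec z i := by
      rw [hpdef, Matrix.mulVec_add, Matrix.mulVec_smul]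
      simp
    rw [htight] at hdec
    nlinarith
  have hxF : x ∉ faceSet P w0 := by
    intro hmem
    have h1 : dotR w0 x ≤ dotR w0 p := hmem.2 p hpP
    rw [hdotw0, hdotw0, htight] at h1
    linarith
  obtain ⟨G, hfacet, hpG, hxG⟩ := exists_facet A B b d hAB hbdd hpF hxP hxF
  have hval : norm1 (x - p) = α * norm1 z := by
    have hxmp : x - p = (-α) • z := by
      rw [hpdef]; funext j
      simp only [Pi.sub_apply, Pi.add_apply, Pi.smul_apply, smul_eq_mul]
      ring
    rw [hxmp, norm1_smul, abs_neg, abs_of_pos hα]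
  have hmem : norm1 (x - p) ∈ {r : ℝ | ∃ v ∈ Set.extremePoints ℝ P,
      ∃ F : Set (Fin n → ℝ), IsFacet P F ∧ v ∉ F ∧ ∃ f ∈ F, r = norm1 (v - f)} :=
    ⟨x, hx, G, hfacet, hxG, p, hpG, rfl⟩
  have hbdd0 : BddBelow {r : ℝ | ∃ v ∈ Set.extremePoints ℝ P,
      ∃ F : Set (Fin n → ℝ), IsFacet P F ∧ v ∉ F ∧ ∃ f ∈ F, r = norm1 (v - f)} := by
    refine ⟨0, ?_⟩
    rintro r ⟨v, _, F, _, _, f, _, rfl⟩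
    exact norm1_nonneg _
  have := csInf_le hbdd0 hmem
  rw [hval] at this
  exact this

lemma omega1_nonneg (P : Set (Fin n → ℝ)) : 0 ≤ omega1 P := by
  apply Real.sInf_nonneg
  rintro r ⟨v, _, F, _, _, f, _, rfl⟩
  exact norm1_nonneg _

/-- a steepest-descent augmentation at a non-optimal vertex of a bounded
polyhedron is an `(M₁/ω₁)`-approximate greatest-improvement augmentation. -/
theorem steepest_descent_approximates_greatest_improvement
    (A : Matrix (Fin mA) (Fin n) ℤ) (B : Matrix (Fin mB) (Fin n) ℤ)
    (b : Fin mA → ℤ) (d : Fin mB → ℤ) (c : Fin n → ℤ)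
    (hmB : 1 ≤ mB)
    (hA : (rmat A).rank = mA)
    (hAB : (rmat (Matrix.fromRows A B)).rank = n)
    (hbdd : Bornology.IsBounded (Pset A B b d))
    (x : Fin n → ℝ) (hx : x ∈ Set.extremePoints ℝ (Pset A B b d))
    (hnonopt : ∃ y ∈ Pset A B b d, dotIC c y < dotIC c x)
    (z : Fin n → ℝ) (α : ℝ) (hsteep : IsSteepAug A B (Pset A B b d) c x z α)
    (zs : Fin n → ℝ) (αs : ℝ) (hgia : IsGIAug A B (Pset A B b d) c x zs αs) :
    (omega1 (Pset A B b d) / M1 (Pset A B b d)) * (dotIC c x - dotIC c (x + αs • zs)) ≤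
      dotIC c x - dotIC c (x + α • z) := by
  obtain ⟨hzCAB, hzmax, hzsteep⟩ := hsteep
  obtain ⟨hsCAB, hsmax, hsgi⟩ := hgia
  have hxP : x ∈ Pset A B b d := extremePoints_subset hx
  have hzne : z ≠ 0 := hzCAB.1.1
  have hsne : zs ≠ 0 := hsCAB.1.1
  have hNz : 0 < norm1 z := norm1_pos hzne
  have hNs : 0 < norm1 zs := norm1_pos hsne
  obtain ⟨hα, hzP, hzno⟩ := hzmax
  obtain ⟨hαs, hsP, hsno⟩ := hsmax
  have hgoal_r : dotIC c x - dotIC c (x + α • z) = α * (-(dotIC c z)) := by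
    rw [dotIC_add, dotIC_smul]; ring
  have hgoal_s : dotIC c x - dotIC c (x + αs • zs) = αs * (-(dotIC c zs)) := by
    rw [dotIC_add, dotIC_smul]; ring
  -- the GI value is nonnegative
  have hmid : x + (αs / 2) • zs ∈ Pset A B b d := by
    have hcomb := (convex_Pset A B b d) hxP hsP
      (by norm_num : (0:ℝ) ≤ 1/2) (by norm_num : (0:ℝ) ≤ 1/2) (by norm_num : (1:ℝ)/2 + 1/2 = 1)
    have heq : (1/2 : ℝ) • x + (1/2 : ℝ) • (x + αs • zs) = x + (αs / 2) • zs := by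
      funext i
      simp only [Pi.add_apply, Pi.smul_apply, smul_eq_mul]
      ring
    rwa [heq] at hcomb
  have hts : 0 ≤ -(dotIC c zs) := by
    have h := hsgi zs (αs / 2) hsCAB (by positivity) hmid
    rw [dotIC_smul, dotIC_smul] at h
    nlinarith
  -- steepest-descent comparison
  have hsteep2 : -(dotIC c zs) / norm1 zs ≤ -(dotIC c z) / norm1 z :=
    hzsteep zs hsCAB ⟨αs, hαs, hsP⟩
  have htz : 0 ≤ -(dotIC c z) := by
    have h1 : 0 ≤ -(dotIC c zs) / norm1 zs := div_nonneg hts hNs.le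
    have h2 : 0 ≤ -(dotIC c z) / norm1 z := le_trans h1 hsteep2
    have h3 := mul_nonneg h2 hNz.le
    rwa [div_mul_cancel₀ _ hNz.ne'] at h3
  -- length of the GI step is at most M1
  have hL : αs * norm1 zs ≤ M1 (Pset A B b d) := by
    have h := norm1_le_M1 A B b d hAB hbdd hsP hxP
    have heq : (x + αs • zs) - x = αs • zs := by
      funext i
      simp only [Pi.sub_apply, Pi.add_apply, Pi.smul_apply, smul_eq_mul]
      ring
    rwa [heq, norm1_smul, abs_of_pos hαs] at h
  have hLpos : 0 < αs * norm1 zs := by positivity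
  have hMpos : 0 < M1 (Pset A B b d) := lt_of_lt_of_le hLpos hL
  have hω0 : 0 ≤ omega1 (Pset A B b d) := omega1_nonneg _
  have hωle : omega1 (Pset A B b d) ≤ α * norm1 z :=
    omega1_le_maxaug A B b d hAB hbdd hx ⟨hα, hzP, hzno⟩
  rw [hgoal_r, hgoal_s]
  set ω := omega1 (Pset A B b d) with hw
  set M := M1 (Pset A B b d) with hM
  set ts := -(dotIC c zs) with hts'
  set tz := -(dotIC c z) with htz'
  -- chain
  have e1 : ω / M * (αs * ts) = ω * ((αs * norm1 zs) / M) * (ts / norm1 zs) := by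
    field_simp
  have hL1 : (αs * norm1 zs) / M ≤ 1 := (div_le_one hMpos).mpr hL
  have k1 : ω * ((αs * norm1 zs) / M) * (ts / norm1 zs) ≤ ω * 1 * (ts / norm1 zs) :=
    mul_le_mul_of_nonneg_right (mul_le_mul_of_nonneg_left hL1 hω0)
      (div_nonneg hts hNs.le)
  have k2 : ω * 1 * (ts / norm1 zs) ≤ ω * 1 * (tz / norm1 z) :=
    mul_le_mul_of_nonneg_left hsteep2 (by linarith)
  have k3 : ω * 1 * (tz / norm1 z) ≤ (α * norm1 z) * (tz / norm1 z) :=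
    mul_le_mul_of_nonneg_right (by linarith) (div_nonneg htz hNz.le)
  have k4 : (α * norm1 z) * (tz / norm1 z) = α * tz := by
    field_simp
  calc ω / M * (αs * ts) = ω * ((αs * norm1 zs) / M) * (ts / norm1 zs) := e1
    _ ≤ ω * 1 * (ts / norm1 zs) := k1
    _ ≤ ω * 1 * (tz / norm1 z) := k2
    _ ≤ (α * norm1 z) * (tz / norm1 z) := k3
    _ = α * tz := k4
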